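/- Let N be an odd positive integer and θ ∈ [0, π/2]. Then the phase-space walk is exactly periodic with period 2N: U_psw(θ)^(2N) equals the 2N×2N identity matrix. -/

import Mathlib

open Complex

/-- `ω = exp(2πi/N)`. -/
noncomputable def omegaN (N : ℕ) : ℂ := Complex.exp (2 * Real.pi * Complex.I / N)

/-- The phase-space quantum walk operator `U_psw(θ)`, a `2N × 2N` matrix indexed by
(coin, walker) pairs, with block form `[[cosθ·T, sinθ·T],[sinθ·T̃, −cosθ·T̃]]`,
where `T` is the cyclic shift (`T|n⟩ = |n+1⟩`) and `T̃` the diagonal matrix with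
`T̃|n⟩ = ω^n|n⟩`. -/
noncomputable def Upsw (N : ℕ) (θ : ℝ) :
    Matrix (Fin 2 × ZMod N) (Fin 2 × ZMod N) ℂ := fun p q =>
  if p.1 = 0 then
    (if q.1 = 0 then (Real.cos θ : ℂ) else (Real.sin θ : ℂ)) *
      (if p.2 = q.2 + 1 then 1 else 0)
  else
    (if q.1 = 0 then (Real.sin θ : ℂ) else (-Real.cos θ : ℂ)) *
      (if p.2 = q.2 then omegaN N ^ (q.2.val) else 0)

lemma omegaN_prim (N : ℕ) [NeZero N] : IsPrimitiveRoot (omegaN N) N := by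
  simpa [omegaN] using Complex.isPrimitiveRoot_exp N (NeZero.ne N)

lemma abs_omegaN (N : ℕ) : ‖omegaN N‖ = 1 := by
  have : (2 * (Real.pi:ℂ) * Complex.I / (N:ℂ)) = ((2 * Real.pi / N : ℝ) : ℂ) * Complex.I := by
    push_cast; ring
  rw [omegaN, this, Complex.norm_exp_ofReal_mul_I]

lemma prod_add_mul (N : ℕ) [NeZero N] (hN : Odd N) (x y : ℂ) :
    ∏ m ∈ Finset.range N, (x + y * omegaN N ^ m) = x ^ N + y ^ N := by
  have h := X_pow_sub_C_eq_prod (omegaN_prim N) (NeZero.pos N) (α := -y) rfl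
  have h2 := congrArg (Polynomial.eval x) h
  simp only [Polynomial.eval_sub, Polynomial.eval_pow, Polynomial.eval_X, Polynomial.eval_C,
    Polynomial.eval_prod, Polynomial.eval_mul] at h2
  rw [hN.neg_pow] at h2
  calc ∏ m ∈ Finset.range N, (x + y * omegaN N ^ m)
      = ∏ m ∈ Finset.range N, (x - omegaN N ^ m * (-y)) := by
        refine Finset.prod_congr rfl fun m _ => by ring
    _ = x ^ N + y ^ N := by rw [← h2]; ring

lemma sum_shift {N : ℕ} [NeZero N] (f : ZMod N → ℂ) (a b : ZMod N) :
    ∑ x : ZMod N, (if a = x + b then f x else 0) = f (a - b) := by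
  have h : ∀ x : ZMod N, (a = x + b) = (a - b = x) := fun x => by
    rw [sub_eq_iff_eq_add]
  simp only [h]
  simp

lemma sum_diag {N : ℕ} [NeZero N] (f : ZMod N → ℂ) (a : ZMod N) :
    ∑ x : ZMod N, (if a = x then f x else 0) = f a := by simp

lemma exists_eigenvector (N : ℕ) [NeZero N] (hN : Odd N) (θ : ℝ)
    (hc1 : Real.cos θ < 1) (hc0 : 0 ≤ Real.cos θ)
    (lam : ℂ) (hlam : lam ^ (2 * N) = 1) :
    ∃ w : Fin 2 × ZMod N → ℂ, w (0, 0) = 1 ∧ (Upsw N θ).mulVec w = lam • w := by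
  set ω : ℂ := omegaN N with hω
  set c : ℂ := (Real.cos θ : ℂ) with hcdef
  set s : ℂ := (Real.sin θ : ℂ) with hsdef
  have h2N : 2 * N ≠ 0 := by have := NeZero.ne N; omega
  have habs : ‖lam‖ = 1 := Complex.norm_eq_one_of_pow_eq_one hlam h2N
  have hlam0 : lam ≠ 0 := by
    intro h; rw [h] at habs; simp at habs
  have hne : ∀ m : ℕ, lam + c * ω ^ m ≠ 0 := by
    intro m h
    have h1 : lam = -(c * ω ^ m) := by linear_combination h
    have h2 : ‖lam‖ = Real.cos θ := by
      rw [h1, norm_neg, norm_mul, norm_pow, abs_omegaN, one_pow, mul_one, hcdef,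
        Complex.norm_real, Real.norm_eq_abs]
      exact _root_.abs_of_nonneg hc0
    rw [habs] at h2
    exact absurd h2.symm (ne_of_lt hc1)
  -- v0
  set v0 : ℕ → ℂ := fun k => ∏ m ∈ Finset.range k, ((c * lam + ω ^ m) / (lam * (lam + c * ω ^ m))) with hv0
  have hstep : ∀ k : ℕ, lam * v0 (k + 1) = v0 k * ((c * lam + ω ^ k) / (lam + c * ω ^ k)) := by
    intro k
    have haux : ∀ a b d : ℂ, d ≠ 0 → lam * (a * (b / (lam * d))) = a * (b / d) := by
      intro a b d hd; field_simp
    rw [hv0]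
    simp only [Finset.prod_range_succ]
    exact haux _ _ _ (hne k)
  have hlamN : lam ^ N * lam ^ N = 1 := by rw [← pow_add, ← two_mul]; exact hlam
  have hPne : lam ^ N + c ^ N ≠ 0 := by
    rw [← prod_add_mul N hN lam c]
    exact Finset.prod_ne_zero_iff.mpr fun m _ => hne m
  have hv0N : v0 N = 1 := by
    rw [hv0]
    simp only
    rw [Finset.prod_div_distrib, Finset.prod_mul_distrib, Finset.prod_const, Finset.card_range,
      prod_add_mul N hN lam c]
    have h1 : ∏ m ∈ Finset.range N, (c * lam + ω ^ m) = (c * lam) ^ N + 1 := by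
      simpa using prod_add_mul N hN (c * lam) 1
    rw [h1, div_eq_one_iff_eq (by exact mul_ne_zero (pow_ne_zero _ hlam0) hPne), mul_pow]
    linear_combination -hlamN
  have hcs : c ^ 2 + s ^ 2 = 1 := by
    rw [hcdef, hsdef]
    push_cast
    exact_mod_cast Real.cos_sq_add_sin_sq θ
  have key : ∀ k : ℕ, c * v0 k + s * (s * ω ^ k * v0 k / (lam + c * ω ^ k)) = lam * v0 (k + 1) := by
    intro k
    rw [hstep k]
    field_simp [hne k]
    linear_combination (v0 k * ω ^ k) * hcs
  have hval : (-1 : ZMod N).val = N - 1 := by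
    obtain ⟨M, rfl⟩ : ∃ M, N = M + 1 := ⟨N - 1, (Nat.succ_pred_eq_of_pos (NeZero.pos N)).symm⟩
    simpa using ZMod.val_neg_one M
  have hN1 : N - 1 + 1 = N := Nat.succ_pred_eq_of_pos (NeZero.pos N)
  have hper : ∀ n : ZMod N, v0 ((n - 1).val + 1) = v0 n.val := by
    intro n
    by_cases h : n = 0
    · subst h
      rw [zero_sub, hval, hN1, hv0N, ZMod.val_zero]
      simp [hv0]
    · have hvpos : n.val ≠ 0 := by rwa [Ne, ZMod.val_eq_zero]
      have hlt : n.val < N := ZMod.val_lt n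
      have hN2 : 1 < N := by omega
      haveI : Fact (1 < N) := ⟨hN2⟩
      have h1 : (1 : ZMod N).val = 1 := ZMod.val_one N
      have hsub : (n - 1).val = n.val - 1 := by
        rw [ZMod.val_sub (by rw [h1]; omega), h1]
      rw [hsub]
      congr 1
      omega
  refine ⟨fun p => if p.1 = 0 then v0 p.2.val else
      s * ω ^ p.2.val * v0 p.2.val / (lam + c * ω ^ p.2.val), by simp [hv0], ?_⟩
  funext p
  obtain ⟨i, n⟩ := p
  fin_cases i
  · show (Upsw N θ).mulVec _ (0, n) = _
    rw [Matrix.mulVec, dotProduct]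
    simp only [Upsw, Fintype.sum_prod_type, Fin.sum_univ_two, Pi.smul_apply, smul_eq_mul]
    norm_num
    rw [sum_shift, sum_shift]
    rw [show Complex.sin ↑θ = s from (Complex.ofReal_sin θ).symm,
      show Complex.cos ↑θ = c from (Complex.ofReal_cos θ).symm]
    rw [← hper n]
    exact key _
  · show (Upsw N θ).mulVec _ (1, n) = _
    rw [Matrix.mulVec, dotProduct]
    simp only [Upsw, Fintype.sum_prod_type, Fin.sum_univ_two, Pi.smul_apply, smul_eq_mul]
    norm_num
    rw [show Complex.sin ↑θ = s from (Complex.ofReal_sin θ).symm,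
      show Complex.cos ↑θ = c from (Complex.ofReal_cos θ).symm, ← hω]
    linear_combination (-(s * ω ^ n.val * v0 n.val)) * div_self (hne n.val)

lemma psw_zero (N : ℕ) [NeZero N] : Upsw N 0 ^ (2 * N) = 1 := by
  have h10 : (1 : Fin 2) ≠ 0 := by decide
  have hM : ∀ k : ℕ, Upsw N 0 ^ k = Matrix.of (fun p q : Fin 2 × ZMod N =>
      if p.1 = 0 then (if q.1 = 0 ∧ p.2 = q.2 + (k : ZMod N) then 1 else 0)
      else (if q.1 = 1 ∧ p.2 = q.2 then (-1) ^ k * (omegaN N ^ q.2.val) ^ k else 0)) := by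
    intro k
    induction k with
    | zero =>
      rw [pow_zero]
      ext ⟨i, n⟩ ⟨j, m⟩
      fin_cases i <;> fin_cases j <;>
        simp [Matrix.one_apply, Prod.ext_iff, h10]
    | succ k ih =>
      rw [pow_succ, ih]
      ext ⟨i, n⟩ ⟨j, m⟩
      rw [Matrix.mul_apply, Fintype.sum_prod_type, Fin.sum_univ_two]
      fin_cases i <;> fin_cases j <;>
        simp [Upsw, h10, mul_ite, ite_mul, Finset.sum_ite_eq, Finset.sum_ite_eq']
      · rw [show m + 1 + (k : ZMod N) = m + (↑k + 1) from by ring]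
      · by_cases hnm : n = m <;> simp [hnm] <;> ring
  rw [hM (2 * N)]
  ext ⟨i, n⟩ ⟨j, m⟩
  have hcast : ((2 * N : ℕ) : ZMod N) = 0 := by
    push_cast [ZMod.natCast_self]; ring
  have hω1 : ((omegaN N ^ m.val) ^ (2 * N)) = 1 := by
    rw [← pow_mul, show m.val * (2 * N) = N * (2 * m.val) by ring, pow_mul,
      (omegaN_prim N).pow_eq_one, one_pow]
  have hneg : ((-1 : ℂ)) ^ (2 * N) = 1 := Even.neg_one_pow (even_two_mul N)
  fin_cases i <;> fin_cases j <;>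
    simp [Matrix.one_apply, Prod.ext_iff, h10, hcast, hω1, hneg]

/-- for odd `N` and `θ ∈ [0, π/2]`, the phase-space walk is exactly
periodic with period `2N`: `U_psw(θ)^(2N) = 1`. -/
theorem psw_periodicity (N : ℕ) [NeZero N] (hN : Odd N)
    (θ : ℝ) (hθ : θ ∈ Set.Icc 0 (Real.pi / 2)) :
    Upsw N θ ^ (2 * N) = 1 := by
  obtain ⟨hθ0, hθ1⟩ := hθ
  by_cases h0 : θ = 0
  · subst h0
    exact psw_zero N
  · have hpi := Real.pi_pos
    have hc1 : Real.cos θ < 1 := by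
      have hne1 : Real.cos θ ≠ 1 := fun h =>
        h0 ((Real.cos_eq_one_iff_of_lt_of_lt (by linarith) (by linarith)).mp h)
      exact lt_of_le_of_ne (Real.cos_le_one θ) hne1
    have hc0 : 0 ≤ Real.cos θ := Real.cos_nonneg_of_mem_Icc ⟨by linarith, hθ1⟩
    have h2N : 2 * N ≠ 0 := by have := NeZero.ne N; omega
    set μ : ℂ := Complex.exp (2 * Real.pi * Complex.I / (2 * N : ℕ)) with hμdef
    have hμ : IsPrimitiveRoot μ (2 * N) := Complex.isPrimitiveRoot_exp _ h2N
    have hpow1 : ∀ j : Fin (2 * N), (μ ^ (j : ℕ)) ^ (2 * N) = 1 := fun j => by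
      rw [← pow_mul, mul_comm, pow_mul, hμ.pow_eq_one, one_pow]
    choose w hw1 hw2 using fun j : Fin (2 * N) =>
      exists_eigenvector N hN θ hc1 hc0 (μ ^ (j : ℕ)) (hpow1 j)
    set f := Matrix.toLinAlgEquiv' (Upsw N θ) with hf
    have hfw : ∀ j, f (w j) = (μ ^ (j : ℕ)) • w j := fun j => by
      rw [hf, Matrix.toLinAlgEquiv'_apply]; exact hw2 j
    have heig : ∀ j : Fin (2 * N), Module.End.HasEigenvector f (μ ^ (j : ℕ)) (w j) := by
      intro j
      refine ⟨Module.End.mem_eigenspace_iff.mpr (hfw j), fun h => ?_⟩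
      have h01 : (0 : ℂ) = 1 := by rw [← hw1 j, h]; rfl
      norm_num at h01
    have hinj : Function.Injective fun j : Fin (2 * N) => μ ^ (j : ℕ) := fun a b h =>
      Fin.ext (hμ.pow_inj a.isLt b.isLt h)
    have hli : LinearIndependent ℂ w :=
      Module.End.eigenvectors_linearIndependent' f (fun j : Fin (2 * N) => μ ^ (j : ℕ)) hinj w heig
    have hcard : Fintype.card (Fin (2 * N)) = Module.finrank ℂ (Fin 2 × ZMod N → ℂ) := by
      simp [Module.finrank_pi, ZMod.card]
    haveI : Nonempty (Fin (2 * N)) := ⟨⟨0, by omega⟩⟩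
    let b := basisOfLinearIndependentOfCardEqFinrank hli hcard
    have hb : ⇑b = w := coe_basisOfLinearIndependentOfCardEqFinrank hli hcard
    have hpowk : ∀ (k : ℕ) (j : Fin (2 * N)), (f ^ k) (w j) = ((μ ^ (j : ℕ)) ^ k) • w j := by
      intro k
      induction k with
      | zero => intro j; simp
      | succ k ih =>
        intro j
        rw [pow_succ, Module.End.mul_apply, hfw j, map_smul, ih j, smul_smul, ← pow_succ']
    have hfpow : f ^ (2 * N) = 1 := by
      apply b.ext
      intro j
      rw [show b j = w j from congrFun hb j, hpowk, hpow1 j, one_smul]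
      rfl
    apply Matrix.toLinAlgEquiv'.injective
    rw [map_pow, map_one]
    exact hfpow
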